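/- With the same hypotheses (commuting formal multiplication matrices over K[z]), the residue classes of t_1,…,t_μ form a free K[z]-module basis of K[z][x_1,…,x_n]/(g_1,…,g_ν); in particular, K[z] → K[z][x_1,…,x_n]/(g_1,…,g_ν) is flat. -/

import Mathlib

open MvPolynomial Finsupp
open Matrix

set_option maxHeartbeats 1000000
set_option synthInstance.maxHeartbeats 400000

open scoped Classical

/-- The border of a finite set of monomials (represented as exponent vectors). -/
noncomputable def borderSet (n : ℕ) (O : Finset (Fin n →₀ ℕ)) : Finset (Fin n →₀ ℕ) :=
  (O.biUnion (fun t => Finset.image (fun k => t + Finsupp.single k 1) Finset.univ)) \ O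


/-- If the formal multiplication matrices over `K[z]` of `g_j = b_j − Σ_i a_{ij}(z) t_i`
pairwise commute, then the residue classes of the order ideal terms form a free `K[z]`-module
basis of `K[z][x_1,…,x_n]/(g_1,…,g_ν)`; in particular this algebra is flat over `K[z]`. -/
theorem family_free_over_Kz (K : Type*) [Field K] (n : ℕ)
    (O : Finset (Fin n →₀ ℕ)) (h0 : (0 : Fin n →₀ ℕ) ∈ O)
    (hO : ∀ t ∈ O, ∀ s : Fin n →₀ ℕ, s ≤ t → s ∈ O)
    (a : (Fin n →₀ ℕ) → (Fin n →₀ ℕ) → Polynomial K)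
    (A : Fin n → Matrix ↥O ↥O (Polynomial K))
    (hA : ∀ (k : Fin n) (r i : ↥O), A k r i =
      if ((i : Fin n →₀ ℕ) + Finsupp.single k 1) ∈ O then
        (if (r : Fin n →₀ ℕ) = (i : Fin n →₀ ℕ) + Finsupp.single k 1 then 1 else 0)
      else a ((i : Fin n →₀ ℕ) + Finsupp.single k 1) r)
    (hcomm : ∀ k l : Fin n, A k * A l = A l * A k)
    (J : Ideal (MvPolynomial (Fin n) (Polynomial K)))
    (hJ : J = Ideal.span {p | ∃ b ∈ borderSet n O,
      p = monomial b 1 - ∑ t ∈ O, MvPolynomial.C (a b t) * monomial t 1}) :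
    LinearIndependent (Polynomial K)
      (fun t : ↥O => Ideal.Quotient.mk J (monomial (t : Fin n →₀ ℕ) (1 : Polynomial K))) ∧
    Submodule.span (Polynomial K)
      (Set.range (fun t : ↥O => Ideal.Quotient.mk J
        (monomial (t : Fin n →₀ ℕ) (1 : Polynomial K)))) = ⊤ ∧
    Module.Flat (Polynomial K) (MvPolynomial (Fin n) (Polynomial K) ⧸ J) := by
  classical
  have hc : ∀ x ∈ Set.range A, ∀ y ∈ Set.range A, x * y = y * x := by
    rintro x ⟨k, rfl⟩ y ⟨l, rfl⟩; exact hcomm k l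
  letI : CommRing (Algebra.adjoin (Polynomial K) (Set.range A)) :=
    Algebra.adjoinCommRingOfComm _ hc
  let A' : Fin n → Algebra.adjoin (Polynomial K) (Set.range A) := fun k =>
    ⟨A k, Algebra.subset_adjoin (Set.mem_range_self k)⟩
  let ψ := MvPolynomial.aeval (R := Polynomial K) A'
  let e0 : ↥O → Polynomial K := Pi.single ⟨0, h0⟩ 1
  let L : MvPolynomial (Fin n) (Polynomial K) →ₗ[Polynomial K] (↥O → Polynomial K) :=
    { toFun := fun p => ((ψ p : Matrix ↥O ↥O (Polynomial K)) *ᵥ e0)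
      map_add' := by
        intro p q
        show ((ψ (p + q) : Matrix ↥O ↥O (Polynomial K)) *ᵥ e0) = _
        rw [_root_.map_add]
        show (((ψ p : Matrix ↥O ↥O (Polynomial K)) + (ψ q : Matrix ↥O ↥O (Polynomial K))) *ᵥ e0) = _
        rw [Matrix.add_mulVec]
      map_smul' := by
        intro c p
        show ((ψ (c • p) : Matrix ↥O ↥O (Polynomial K)) *ᵥ e0) = _
        rw [_root_.map_smul]
        show ((c • (ψ p : Matrix ↥O ↥O (Polynomial K))) *ᵥ e0) = _
        rw [Matrix.smul_mulVec]
        rfl }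
  have Lmul : ∀ p q, L (p * q) = (ψ p : Matrix ↥O ↥O (Polynomial K)) *ᵥ L q := by
    intro p q
    show ((ψ (p * q) : Matrix ↥O ↥O (Polynomial K)) *ᵥ e0) = _
    rw [_root_.map_mul]
    show (((ψ p : Matrix ↥O ↥O (Polynomial K)) * (ψ q : Matrix ↥O ↥O (Polynomial K))) *ᵥ e0) = _
    rw [← Matrix.mulVec_mulVec]
    rfl
  have hψX : ∀ k, ((ψ (X k) : Matrix ↥O ↥O (Polynomial K))) = A k := by
    intro k
    have : ψ (X k) = A' k := aeval_X (f := A') k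
    rw [this]
  have step : ∀ (m : Fin n →₀ ℕ) (k : Fin n),
      L (monomial (m + Finsupp.single k 1) 1) = A k *ᵥ L (monomial m 1) := by
    intro m k
    have h1 : monomial (m + Finsupp.single k 1) (1 : Polynomial K) = X k * monomial m 1 := by
      rw [add_comm m (Finsupp.single k 1), ← pow_one (X k : MvPolynomial (Fin n) (Polynomial K)),
        ← monomial_single_add]
    rw [h1, Lmul, hψX]
  -- degree function
  have hsum_sub : ∀ (m : Fin n →₀ ℕ) (k : Fin n), Finsupp.single k 1 ≤ m →
      (m.sum fun _ e => e) = ((m - Finsupp.single k 1).sum fun _ e => e) + 1 := by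
    intro m k hle
    have hmm : (m - Finsupp.single k 1) + Finsupp.single k 1 = m := tsub_add_cancel_of_le hle
    conv_lhs => rw [← hmm]
    rw [Finsupp.sum_add_index' (fun _ => rfl) (fun _ _ _ => rfl),
      Finsupp.sum_single_index rfl]
  have vecO : ∀ (d : ℕ) (m : Fin n →₀ ℕ) (hm : m ∈ O), (m.sum fun _ e => e) ≤ d →
      L (monomial m 1) = Pi.single (⟨m, hm⟩ : ↥O) 1 := by
    intro d
    induction d with
    | zero =>
      intro m hm hs
      have hm0 : m = 0 := by
        ext k
        simp only [Finsupp.coe_zero, Pi.zero_apply]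
        by_contra hk
        have hks : k ∈ m.support := Finsupp.mem_support_iff.2 hk
        have : m k ≤ (m.sum fun _ e => e) :=
          Finset.single_le_sum (f := fun a => m a) (fun _ _ => Nat.zero_le _) hks
        omega
      subst hm0
      have h1 : (monomial (0 : Fin n →₀ ℕ) (1 : Polynomial K)) = 1 := by
        rw [monomial_zero']; exact map_one C
      rw [h1]
      show ((ψ 1 : Matrix ↥O ↥O (Polynomial K)) *ᵥ e0) = _
      rw [_root_.map_one]
      show ((1 : Matrix ↥O ↥O (Polynomial K)) *ᵥ e0) = _
      rw [Matrix.one_mulVec]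
    | succ d ih =>
      intro m hm hs
      by_cases hd : (m.sum fun _ e => e) ≤ d
      · exact ih m hm hd
      · have hmne : m ≠ 0 := by
          intro h; subst h; simp [Finsupp.sum_zero_index] at hd
        obtain ⟨k, hk⟩ := Finsupp.support_nonempty_iff.2 hmne
        have hk1 : m k ≠ 0 := Finsupp.mem_support_iff.1 hk
        have hle : Finsupp.single k 1 ≤ m := by
          rw [Finsupp.single_le_iff]; omega
        set m' := m - Finsupp.single k 1 with hm'def
        have hmm : m' + Finsupp.single k 1 = m := tsub_add_cancel_of_le hle
        have hm' : m' ∈ O := hO m hm m' tsub_le_self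
        have hs' : (m'.sum fun _ e => e) ≤ d := by
          have h2 := hsum_sub m k hle
          rw [← hm'def] at h2
          omega
        have := step m' k
        rw [hmm] at this
        rw [this, ih m' hm' hs']
        funext r
        rw [Matrix.mulVec_single]
        show A k r ⟨m', hm'⟩ * 1 = _
        rw [hA k r ⟨m', hm'⟩]
        have hcond : (((⟨m', hm'⟩ : ↥O) : Fin n →₀ ℕ) + Finsupp.single k 1) ∈ O := by
          show m' + Finsupp.single k 1 ∈ O; rw [hmm]; exact hm
        rw [if_pos hcond, Pi.single_apply, mul_one]
        have : ((r : Fin n →₀ ℕ) = m' + Finsupp.single k 1) ↔ (r = ⟨m, hm⟩) := by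
          rw [hmm, Subtype.ext_iff]
        simp only [this]
  have vecB : ∀ b ∈ borderSet n O, L (monomial b 1) = fun r : ↥O => a b (r : Fin n →₀ ℕ) := by
    intro b hb
    rw [borderSet, Finset.mem_sdiff] at hb
    obtain ⟨hbi, hbO⟩ := hb
    obtain ⟨t, ht, hbt⟩ := Finset.mem_biUnion.1 hbi
    obtain ⟨k, -, hbk⟩ := Finset.mem_image.1 hbt
    subst hbk
    rw [step t k, vecO (t.sum fun _ e => e) t ht le_rfl]
    funext r
    rw [Matrix.mulVec_single]
    show A k r ⟨t, ht⟩ * 1 = _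
    rw [mul_one, hA k r ⟨t, ht⟩, if_neg hbO]
  -- L kills the generators
  have Lgen : ∀ b ∈ borderSet n O,
      L (monomial b 1 - ∑ t ∈ O, MvPolynomial.C (a b t) * monomial t 1) = 0 := by
    intro b hb
    rw [map_sub, map_sum]
    have hterm : ∀ t ∈ O, L (MvPolynomial.C (a b t) * monomial t 1)
        = a b t • L (monomial t 1) := by
      intro t ht
      rw [← smul_eq_C_mul]; exact map_smul L _ _
    rw [Finset.sum_congr rfl hterm, vecB b hb]
    rw [← Finset.sum_attach O (fun t => a b t • L (monomial t 1))]
    have hterm2 : ∀ t : {x // x ∈ O}, a b ↑t • L (monomial (↑t) 1)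
        = a b ↑t • (Pi.single t 1 : ↥O → Polynomial K) := by
      intro t
      rw [vecO ((t : Fin n →₀ ℕ).sum fun _ e => e) ↑t t.prop le_rfl]
    rw [Finset.sum_congr rfl (fun t _ => hterm2 t)]
    funext r
    simp only [Pi.sub_apply, Finset.sum_apply, Pi.smul_apply, Pi.single_apply,
      smul_eq_mul, mul_ite, mul_one, mul_zero]
    rw [Finset.sum_ite_eq O.attach r (fun t => a b ↑t), if_pos (Finset.mem_attach O r)]
    exact sub_self _
  -- L kills J
  have LJ : ∀ p ∈ J, L p = 0 := by
    intro p hp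
    rw [hJ] at hp
    refine Submodule.span_induction ?_ ?_ ?_ ?_ hp
    · rintro x ⟨b, hb, rfl⟩
      exact Lgen b hb
    · exact map_zero L
    · intro x y _ _ hx hy
      rw [map_add, hx, hy, add_zero]
    · intro c x _ hx
      rw [smul_eq_mul, Lmul, hx, Matrix.mulVec_zero]
  -- Linear independence
  have hli : LinearIndependent (Polynomial K)
      (fun t : ↥O => Ideal.Quotient.mk J (monomial (t : Fin n →₀ ℕ) (1 : Polynomial K))) := by
    rw [linearIndependent_iff']
    intro s g hsum i hi
    set q : MvPolynomial (Fin n) (Polynomial K) :=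
      ∑ t ∈ s, g t • monomial (t : Fin n →₀ ℕ) 1 with hqdef
    have hq0 : Ideal.Quotient.mk J q = 0 := by
      rw [hqdef, map_sum]
      rw [← hsum]
      refine Finset.sum_congr rfl (fun t _ => ?_)
      exact map_smul (Ideal.Quotient.mkₐ (Polynomial K) J) _ _
    have hqJ : q ∈ J := (Ideal.Quotient.eq_zero_iff_mem).1 hq0
    have hLq : L q = 0 := LJ q hqJ
    have hLq2 : L q = ∑ t ∈ s, g t • (Pi.single t 1 : ↥O → Polynomial K) := by
      rw [hqdef, map_sum]
      refine Finset.sum_congr rfl (fun t _ => ?_)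
      rw [_root_.map_smul, vecO ((t : Fin n →₀ ℕ).sum fun _ e => e) ↑t t.prop le_rfl]
    have := congrFun (hLq2.symm.trans hLq) i
    simp only [Finset.sum_apply, Pi.smul_apply, Pi.single_apply, smul_eq_mul,
      mul_ite, mul_one, mul_zero, Pi.zero_apply] at this
    rwa [Finset.sum_ite_eq s i g, if_pos hi] at this
  -- Spanning
  set SP := Submodule.span (Polynomial K)
      (Set.range (fun t : ↥O => Ideal.Quotient.mk J
        (monomial (t : Fin n →₀ ℕ) (1 : Polynomial K)))) with hSPdef
  have main : ∀ (d : ℕ) (s t : Fin n →₀ ℕ), t ∈ O → (s.sum fun _ e => e) ≤ d →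
      Ideal.Quotient.mk J (monomial (t + s) (1 : Polynomial K)) ∈ SP := by
    intro d
    induction d with
    | zero =>
      intro s t ht hs
      have hs0 : s = 0 := by
        ext k
        simp only [Finsupp.coe_zero, Pi.zero_apply]
        by_contra hk
        have hks : k ∈ s.support := Finsupp.mem_support_iff.2 hk
        have : s k ≤ (s.sum fun _ e => e) :=
          Finset.single_le_sum (f := fun a => s a) (fun _ _ => Nat.zero_le _) hks
        omega
      subst hs0
      rw [add_zero]
      exact Submodule.subset_span ⟨⟨t, ht⟩, rfl⟩
    | succ d ih =>
      intro s t ht hs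
      by_cases hd : (s.sum fun _ e => e) ≤ d
      · exact ih s t ht hd
      · have hsne : s ≠ 0 := by
          intro h; subst h; simp [Finsupp.sum_zero_index] at hd
        obtain ⟨k, hk⟩ := Finsupp.support_nonempty_iff.2 hsne
        have hk1 : s k ≠ 0 := Finsupp.mem_support_iff.1 hk
        have hle : Finsupp.single k 1 ≤ s := by
          rw [Finsupp.single_le_iff]; omega
        set s' := s - Finsupp.single k 1 with hs'def
        have hss : s' + Finsupp.single k 1 = s := tsub_add_cancel_of_le hle
        have hs' : (s'.sum fun _ e => e) ≤ d := by
          have h2 := hsum_sub s k hle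
          rw [← hs'def] at h2
          omega
        by_cases hb : t + Finsupp.single k 1 ∈ O
        · have hrw : t + s = (t + Finsupp.single k 1) + s' := by
            rw [← hss]; abel
          rw [hrw]
          exact ih s' (t + Finsupp.single k 1) hb hs'
        · have hbmem : t + Finsupp.single k 1 ∈ borderSet n O := by
            rw [borderSet, Finset.mem_sdiff]
            exact ⟨Finset.mem_biUnion.2 ⟨t, ht,
              Finset.mem_image.2 ⟨k, Finset.mem_univ k, rfl⟩⟩, hb⟩
          set b := t + Finsupp.single k 1 with hbdef
          have hgJ : (monomial b 1 - ∑ t' ∈ O, MvPolynomial.C (a b t') * monomial t' 1) ∈ J := by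
            rw [hJ]
            exact Ideal.subset_span ⟨b, hbmem, rfl⟩
          have hmk : Ideal.Quotient.mk J (monomial b (1 : Polynomial K))
              = Ideal.Quotient.mk J (∑ t' ∈ O, MvPolynomial.C (a b t') * monomial t' 1) :=
            Ideal.Quotient.eq.2 hgJ
          have hmon : monomial (t + s) (1 : Polynomial K) = monomial s' 1 * monomial b 1 := by
            rw [monomial_mul, mul_one]
            congr 1
            rw [hbdef, ← hss]; abel
          rw [hmon, _root_.map_mul, hmk, ← _root_.map_mul, Finset.mul_sum, map_sum]
          refine Submodule.sum_mem _ (fun t' ht' => ?_)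
          have hterm : monomial s' (1 : Polynomial K) * (MvPolynomial.C (a b t') * monomial t' 1)
              = a b t' • monomial (t' + s') 1 := by
            rw [← smul_eq_C_mul, mul_smul_comm, monomial_mul, one_mul, add_comm s' t']
          rw [hterm]
          have hsm : Ideal.Quotient.mk J (a b t' • monomial (t' + s') (1 : Polynomial K))
              = a b t' • Ideal.Quotient.mk J (monomial (t' + s') (1 : Polynomial K)) := by
            rw [← Ideal.Quotient.mkₐ_eq_mk (Polynomial K) J]
            exact _root_.map_smul (Ideal.Quotient.mkₐ (Polynomial K) J) _ _
          rw [hsm]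
          exact Submodule.smul_mem _ _ (ih s' t' ht' hs')
  have hspan : SP = ⊤ := by
    rw [eq_top_iff]
    rintro x -
    obtain ⟨p, rfl⟩ := Ideal.Quotient.mk_surjective x
    have hp : Ideal.Quotient.mk J p
        = ∑ v ∈ p.support, MvPolynomial.coeff v p • Ideal.Quotient.mk J (monomial v 1) := by
      conv_lhs => rw [MvPolynomial.as_sum p]
      rw [map_sum]
      refine Finset.sum_congr rfl (fun v _ => ?_)
      have : monomial v (MvPolynomial.coeff v p) = MvPolynomial.coeff v p • monomial v 1 := by
        rw [smul_monomial, smul_eq_mul, mul_one]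
      rw [this]
      exact map_smul (Ideal.Quotient.mkₐ (Polynomial K) J) _ _
    rw [hp]
    refine Submodule.sum_mem _ (fun v _ => Submodule.smul_mem _ _ ?_)
    have := main (v.sum fun _ e => e) v 0 h0 le_rfl
    rwa [zero_add] at this
  refine ⟨hli, hspan, ?_⟩
  let B : Module.Basis ↥O (Polynomial K) (MvPolynomial (Fin n) (Polynomial K) ⧸ J) :=
    Module.Basis.mk hli (by rw [← hSPdef, hspan])
  haveI : Module.Free (Polynomial K) (MvPolynomial (Fin n) (Polynomial K) ⧸ J) :=
    Module.Free.of_basis B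
  infer_instance
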